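/- Fix κ > 0 and b ∈ ℝ. The function a ↦ smin(a,b,κ) is differentiable at every a ∈ ℝ, with derivative equal to max(0, min(1, 1/2 − (a−b)/(2κ))); in particular the derivative equals 0 when a−b ≥ κ, equals 1 when a−b ≤ −κ, and equals 1−h with h = 1/2 + (a−b)/(2κ) when −κ ≤ a−b ≤ κ. -/

import Mathlib

/-- The smoothed minimum with smoothing gain `κ`. -/
noncomputable def smin (a b κ : ℝ) : ℝ :=
  if a - b ≥ κ then b
  else if a - b ≤ -κ then a
  else
    a * (1 - (1 / 2 + (a - b) / (2 * κ))) + (1 / 2 + (a - b) / (2 * κ)) * b -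
      κ * (1 / 2 + (a - b) / (2 * κ)) * (1 - (1 / 2 + (a - b) / (2 * κ)))

/-- The smoothed maximum with smoothing gain `κ`. -/
noncomputable def smax (a b κ : ℝ) : ℝ :=
  if b - a ≥ κ then b
  else if b - a ≤ -κ then a
  else
    b * (1 - (1 / 2 + (a - b) / (2 * κ))) + (1 / 2 + (a - b) / (2 * κ)) * a +
      κ * (1 / 2 + (a - b) / (2 * κ)) * (1 - (1 / 2 + (a - b) / (2 * κ)))

lemma smin_eq_right {b κ : ℝ} (x : ℝ) (h : x - b ≥ κ) : smin x b κ = b := by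
  simp [smin, h]

lemma smin_eq_left {b κ : ℝ} (hκ : 0 < κ) (x : ℝ) (h : x - b ≤ -κ) : smin x b κ = x := by
  have h1 : ¬ (x - b ≥ κ) := by linarith
  simp [smin, h1, h]

lemma smin_eq_mid {b κ : ℝ} (hκ : 0 < κ) (x : ℝ) (h1 : -κ ≤ x - b) (h2 : x - b ≤ κ) :
    smin x b κ = b - (κ - (x - b)) ^ 2 / (4 * κ) := by
  unfold smin
  have hκ' : κ ≠ 0 := ne_of_gt hκ
  by_cases hc : x - b ≥ κ
  · have hx : x - b = κ := le_antisymm h2 hc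
    simp [hc, hx]
  · simp only [hc, if_false]
    by_cases hd : x - b ≤ -κ
    · have hx : x - b = -κ := le_antisymm hd h1
      simp only [hd, if_true]
      have : (κ - (x - b)) ^ 2 = 4 * κ * κ := by rw [hx]; ring
      rw [this]
      field_simp
      linarith
    · simp only [hd, if_false]
      field_simp
      ring

lemma P_deriv {b κ : ℝ} (hκ : 0 < κ) (a : ℝ) :
    HasDerivAt (fun x : ℝ => b - (κ - (x - b)) ^ 2 / (4 * κ))
      ((κ - (a - b)) / (2 * κ)) a := by
  have h1 : HasDerivAt (fun x : ℝ => κ - (x - b)) (-1) a := by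
    simpa using ((hasDerivAt_id a).sub_const b).const_sub κ
  have h2 := ((h1.fun_pow 2).div_const (4 * κ)).const_sub b
  refine h2.congr_deriv ?_
  have hκ' : (κ : ℝ) ≠ 0 := ne_of_gt hκ
  field_simp
  ring

theorem smin_hasDerivAt_fst (κ : ℝ) (hκ : 0 < κ) (b : ℝ) (a : ℝ) :
    HasDerivAt (fun x : ℝ => smin x b κ)
      (max 0 (min 1 (1 / 2 - (a - b) / (2 * κ)))) a ∧
    (a - b ≥ κ → max 0 (min 1 (1 / 2 - (a - b) / (2 * κ))) = 0) ∧
    (a - b ≤ -κ → max 0 (min 1 (1 / 2 - (a - b) / (2 * κ))) = 1) ∧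
    (-κ ≤ a - b → a - b ≤ κ →
      max 0 (min 1 (1 / 2 - (a - b) / (2 * κ))) = 1 - (1 / 2 + (a - b) / (2 * κ))) := by
  have hκ' : κ ≠ 0 := ne_of_gt hκ
  have h2κ : (0:ℝ) < 2 * κ := by linarith
  -- value of the max-min expression in each regime
  have hval0 : a - b ≥ κ → max 0 (min 1 (1 / 2 - (a - b) / (2 * κ))) = 0 := by
    intro h
    have : 1 / 2 - (a - b) / (2 * κ) ≤ 0 := by
      rw [sub_nonpos, le_div_iff₀ h2κ]; linarith
    rw [max_eq_left]
    exact le_trans (min_le_right _ _) this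
  have hval1 : a - b ≤ -κ → max 0 (min 1 (1 / 2 - (a - b) / (2 * κ))) = 1 := by
    intro h
    have : (1:ℝ) ≤ 1 / 2 - (a - b) / (2 * κ) := by
      have : (a - b) / (2 * κ) ≤ -(1/2) := by
        rw [div_le_iff₀ h2κ]; linarith
      linarith
    rw [min_eq_left this, max_eq_right]; linarith
  have hvalm : -κ ≤ a - b → a - b ≤ κ →
      max 0 (min 1 (1 / 2 - (a - b) / (2 * κ))) = 1 - (1 / 2 + (a - b) / (2 * κ)) := by
    intro h1 h2
    have hle : (a - b) / (2 * κ) ≤ 1/2 := by rw [div_le_iff₀ h2κ]; linarith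
    have hge : -(1/2) ≤ (a - b) / (2 * κ) := by rw [le_div_iff₀ h2κ]; linarith
    rw [min_eq_right (by linarith), max_eq_right (by linarith)]
    ring
  refine ⟨?_, hval0, hval1, hvalm⟩
  -- derivative of the quadratic middle piece
  have hP := P_deriv (b := b) hκ a
  rcases lt_trichotomy (a - b) κ with hlt | heq | hgt
  · rcases lt_trichotomy (a - b) (-κ) with hlt2 | heq2 | hgt2
    · -- left region: smin = id
      rw [hval1 (le_of_lt hlt2)]
      have hev : (fun x : ℝ => smin x b κ) =ᶠ[nhds a] (fun x => x) := by
        have : Set.Iio (b - κ) ∈ nhds a := Iio_mem_nhds (by linarith)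
        filter_upwards [this] with x hx
        exact smin_eq_left hκ x (by simp at hx; linarith)
      exact (hasDerivAt_id a).congr_of_eventuallyEq hev
    · -- boundary a - b = -κ : glue id (left) and quadratic (right)
      rw [hvalm (le_of_eq heq2.symm) (le_of_lt hlt)]
      have hderiv : (1:ℝ) - (1 / 2 + (a - b) / (2 * κ)) = (κ - (a - b)) / (2 * κ) := by
        field_simp; ring
      rw [hderiv]
      have hleft : HasDerivWithinAt (fun x : ℝ => smin x b κ)
          ((κ - (a - b)) / (2 * κ)) (Set.Iic a) a := by
        have : HasDerivWithinAt (fun x : ℝ => x) ((κ - (a - b)) / (2 * κ)) (Set.Iic a) a := by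
          have : (κ - (a - b)) / (2 * κ) = 1 := by rw [heq2]; field_simp; ring
          rw [this]; exact (hasDerivAt_id a).hasDerivWithinAt
        refine this.congr (fun x hx => ?_) ?_
        · exact smin_eq_left hκ x (by simp at hx; linarith)
        · exact smin_eq_left hκ a (le_of_eq heq2)
      have hright : HasDerivWithinAt (fun x : ℝ => smin x b κ)
          ((κ - (a - b)) / (2 * κ)) (Set.Ici a) a := by
        refine hP.hasDerivWithinAt.congr_of_eventuallyEq ?_ ?_
        · have hmem : Set.Iio (b + κ) ∈ nhdsWithin a (Set.Ici a) :=
            nhdsWithin_le_nhds (Iio_mem_nhds (by linarith))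
          filter_upwards [hmem, self_mem_nhdsWithin] with x hx1 hx2
          exact smin_eq_mid hκ x (by simp at hx2; linarith) (by simp at hx1; linarith)
        · exact smin_eq_mid hκ a (le_of_eq heq2.symm) (le_of_lt hlt)
      have := hleft.union hright
      rwa [Set.Iic_union_Ici, hasDerivWithinAt_univ] at this
    · -- middle open region
      rw [hvalm (le_of_lt hgt2) (le_of_lt hlt)]
      have hderiv : (1:ℝ) - (1 / 2 + (a - b) / (2 * κ)) = (κ - (a - b)) / (2 * κ) := by
        field_simp; ring
      rw [hderiv]
      refine hP.congr_of_eventuallyEq ?_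
      have hmem : Set.Ioo (b - κ) (b + κ) ∈ nhds a :=
        Ioo_mem_nhds (by linarith) (by linarith)
      filter_upwards [hmem] with x hx
      exact smin_eq_mid hκ x (by linarith [hx.1]) (by linarith [hx.2])
  · -- boundary a - b = κ : glue quadratic (left) and const (right)
    rw [hval0 (le_of_eq heq.symm)]
    have hd0 : (κ - (a - b)) / (2 * κ) = 0 := by rw [heq]; simp
    have hleft : HasDerivWithinAt (fun x : ℝ => smin x b κ) 0 (Set.Iic a) a := by
      rw [← hd0]
      refine hP.hasDerivWithinAt.congr_of_eventuallyEq ?_ ?_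
      · have hmem : Set.Ioi (b - κ) ∈ nhdsWithin a (Set.Iic a) :=
          nhdsWithin_le_nhds (Ioi_mem_nhds (by linarith))
        filter_upwards [hmem, self_mem_nhdsWithin] with x hx1 hx2
        exact smin_eq_mid hκ x (by simp at hx1; linarith) (by simp at hx2; linarith)
      · exact smin_eq_mid hκ a (by linarith) (le_of_eq heq)
    have hright : HasDerivWithinAt (fun x : ℝ => smin x b κ) 0 (Set.Ici a) a := by
      refine (hasDerivAt_const a b).hasDerivWithinAt.congr (fun x hx => ?_) ?_
      · exact smin_eq_right x (by simp at hx; linarith)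
      · exact smin_eq_right a (ge_of_eq heq)
    have := hleft.union hright
    rwa [Set.Iic_union_Ici, hasDerivWithinAt_univ] at this
  · -- right region: smin = const b
    rw [hval0 (le_of_lt hgt)]
    have hev : (fun x : ℝ => smin x b κ) =ᶠ[nhds a] (fun _ => b) := by
      have : Set.Ioi (b + κ) ∈ nhds a := Ioi_mem_nhds (by linarith)
      filter_upwards [this] with x hx
      exact smin_eq_right x (by simp at hx; linarith)
    exact (hasDerivAt_const a b).congr_of_eventuallyEq hev
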